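/- Let G be an r-regular graph on n vertices with r ≥ 1, with adjacency eigenvalues λ₁ = r ≥ λ₂ ≥ ... ≥ λ_n. Set μ := max{λ₂+1, −λ_n−1}. Then (n/4)·(λ₂ − λ_n)/(r − λ_n) ≤ (n/2)·μ/(μ + r + 1), with equality if and only if λ₂ = r or λ₂ + λ_n + 2 = 0. (The left-hand side equals (1/2)·φ_H(G) and the right-hand side equals ĥ(B₀(G)).) -/

import Mathlib

open Finset Matrix

variable {V : Type*} [Fintype V] [DecidableEq V]

/-- The trace inner product `⟨A,B⟩ = ∑_{i,j} A_{ij} B_{ij}` of two matrices. -/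
noncomputable def ip (A B : Matrix V V ℝ) : ℝ := ∑ i, ∑ j, A i j * B i j

/-- The matrix `C` associated to the bipartition `(P, Pᶜ)`: entry `1/2` whenever the two
indices lie on opposite sides of the bipartition, and `0` otherwise. -/
noncomputable def Cmat (P : Finset V) : Matrix V V ℝ :=
  Matrix.of fun i j => if (i ∈ P ↔ j ∈ P) then 0 else 1/2

/-- The `(1+|V|)×(1+|V|)` block matrix `[[1, xᵀ],[x, X]]`. -/
noncomputable def dblk (x : V → ℝ) (X : Matrix V V ℝ) : Matrix (Unit ⊕ V) (Unit ⊕ V) ℝ :=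
  Matrix.fromBlocks 1 (Matrix.of fun _ j => x j) (Matrix.of fun i _ => x i) X

/-- The semidefinite programming bound `h₁(G)` for a bipartite graph `G` with
bipartition `(P, Pᶜ)`. -/
noncomputable def h1 (G : SimpleGraph V) (P : Finset V) : ℝ :=
  sSup {x : ℝ | ∃ X : Matrix V V ℝ, X.PosSemidef ∧ X.trace = 1 ∧
    (∀ i j, G.Adj i j → X i j = 0) ∧ x = ip (Cmat P) X}

/-- The semidefinite programming bound `g₁(G)` for a bipartite graph `G` with
bipartition `(P, Pᶜ)`. -/
noncomputable def g1 (G : SimpleGraph V) (P : Finset V) : ℝ :=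
  sSup {x : ℝ | ∃ X : Matrix V V ℝ, (dblk (fun i => X i i) X).PosSemidef ∧
    (∀ i j, G.Adj i j → X i j = 0) ∧ x = ip (Cmat P) X}

/-- The adjacency matrix of a graph is Hermitian (over `ℝ`). -/
lemma adjHerm (G : SimpleGraph V) [DecidableRel G.Adj] : (G.adjMatrix ℝ).IsHermitian := by
  rw [Matrix.IsHermitian, Matrix.conjTranspose_eq_transpose_of_trivial]
  exact G.isSymm_adjMatrix

/-- The list of eigenvalues of a Hermitian matrix, with multiplicities,
sorted in nondecreasing order. -/
noncomputable def eigList (A : Matrix V V ℝ) (hA : A.IsHermitian) : List ℝ :=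
  (Finset.univ.val.map hA.eigenvalues).sort (· ≤ ·)

/-- The second largest eigenvalue (with multiplicities) of a Hermitian matrix. -/
noncomputable def secondLargest (A : Matrix V V ℝ) (hA : A.IsHermitian) : ℝ :=
  (eigList A hA).getD (Fintype.card V - 2) 0

/-- The smallest eigenvalue of a Hermitian matrix. -/
noncomputable def smallestEig (A : Matrix V V ℝ) (hA : A.IsHermitian) : ℝ :=
  (eigList A hA).getD 0 0

/-- A graph is edge-transitive if its automorphism group acts transitively on edges. -/
def EdgeTransitive (G : SimpleGraph V) : Prop :=
  ∀ e f : G.edgeSet, ∃ φ : G ≃g G, φ.mapEdgeSet e = f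

/-- A graph is vertex-transitive if its automorphism group acts transitively on vertices. -/
def VertexTransitive (G : SimpleGraph V) : Prop :=
  ∀ u v : V, ∃ φ : G ≃g G, φ u = v

lemma trace_eq_sum_eigs (A : Matrix V V ℝ) (hA : A.IsHermitian) :
    A.trace = ∑ i, hA.eigenvalues i := by
  conv_lhs => rw [hA.spectral_theorem, Unitary.conjStarAlgAut_apply]
  rw [Matrix.trace_mul_comm, ← Matrix.mul_assoc,
    Matrix.mem_unitaryGroup_iff'.mp (hA.eigenvectorUnitary).2, Matrix.one_mul,
    Matrix.trace_diagonal]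
  simp

lemma eig_abs_le (G : SimpleGraph V) [DecidableRel G.Adj] (r : ℕ)
    (hreg : G.IsRegularOfDegree r) (hA : (G.adjMatrix ℝ).IsHermitian) (i : V) :
    |hA.eigenvalues i| ≤ (r : ℝ) := by
  have hv := hA.mulVec_eigenvectorBasis i
  have hne : (⇑(hA.eigenvectorBasis i) : V → ℝ) ≠ 0 := by
    intro h
    exact hA.eigenvectorBasis.orthonormal.ne_zero i (by ext j; exact congrFun h j)
  have heig : Module.End.HasEigenvalue (Matrix.toLin' (G.adjMatrix ℝ)) (hA.eigenvalues i) := by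
    refine Module.End.hasEigenvalue_of_hasEigenvector
      (x := (⇑(hA.eigenvectorBasis i) : V → ℝ)) ⟨?_, hne⟩
    rw [Module.End.mem_eigenspace_iff, Matrix.toLin'_apply, hv]
  obtain ⟨k, hk⟩ := eigenvalue_mem_ball heig
  rw [Metric.mem_closedBall, Real.dist_eq] at hk
  have hdiag : (G.adjMatrix ℝ) k k = 0 := by simp
  have hsum : ∑ j ∈ Finset.univ.erase k, ‖(G.adjMatrix ℝ) k j‖ = (r : ℝ) := by
    have : ∀ j, ‖(G.adjMatrix ℝ) k j‖ = (G.adjMatrix ℝ) k j := by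
      intro j
      simp only [SimpleGraph.adjMatrix_apply]
      split <;> simp
    simp_rw [this]
    rw [Finset.sum_erase _ hdiag]
    have hdv := hreg k
    simp only [SimpleGraph.adjMatrix_apply, Finset.sum_boole]
    rw [← SimpleGraph.neighborFinset_eq_filter]
    exact_mod_cast hdv
  rw [hdiag, sub_zero, hsum] at hk
  exact hk

lemma core_alg (r a b : ℝ) (hr : 1 ≤ r) (hba : b ≤ a) (har : a ≤ r) (hbr : -r ≤ b)
    (hb0 : b ≤ 0) :
    (a-b)/(r-b) ≤ 2*(max (a+1) (-b-1) / (max (a+1) (-b-1) + r + 1)) ∧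
    ((a-b)/(r-b) = 2*(max (a+1) (-b-1) / (max (a+1) (-b-1) + r + 1)) ↔
      a = r ∨ a + b + 2 = 0) := by
  have hrb : (0:ℝ) < r - b := by linarith
  rcases le_or_gt (-b-1) (a+1) with hc | hc
  · rw [max_eq_left hc]
    have h2 : 0 ≤ a + b + 2 := by linarith
    have hd : (0:ℝ) < a + 1 + r + 1 := by linarith
    rw [mul_div_assoc', div_le_div_iff₀ hrb hd, div_eq_div_iff hrb.ne' hd.ne']
    constructor
    · nlinarith [mul_nonneg (sub_nonneg.mpr har) h2]
    · constructor
      · intro h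
        have hz : (r - a) * (a + b + 2) = 0 := by linear_combination -h
        rcases mul_eq_zero.mp hz with h' | h'
        · exact Or.inl (by linarith)
        · exact Or.inr (by linarith)
      · rintro (h | h)
        · rw [h]; ring
        · linear_combination (-(r-a)) * h
  · rw [max_eq_right hc.le]
    have h2 : a + b + 2 < 0 := by linarith
    have hd : (0:ℝ) < -b - 1 + r + 1 := by linarith
    rw [mul_div_assoc', div_le_div_iff₀ hrb hd, div_eq_div_iff hrb.ne' hd.ne']
    constructor
    · nlinarith [mul_nonpos_of_nonpos_of_nonneg h2.le hrb.le]
    · constructor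
      · intro h
        have hz : (a + b + 2) * (r - b) = 0 := by linear_combination h
        rcases mul_eq_zero.mp hz with h' | h'
        · exact Or.inr h'
        · exact absurd h' hrb.ne'
      · rintro (h | h) <;> linarith

/-- for an `r`-regular graph `G` on `n` vertices (`r ≥ 1`) with adjacency
eigenvalues `λ₁ = r ≥ λ₂ ≥ … ≥ λ_n`, setting `μ := max{λ₂+1, −λ_n−1}`, we have
`(n/4)·(λ₂ − λ_n)/(r − λ_n) ≤ (n/2)·μ/(μ + r + 1)`, with equality iff `λ₂ = r` or
`λ₂ + λ_n + 2 = 0`.  (The left side is `(1/2)·φ_H(G)`, the right side `ĥ(B₀(G))`.) -/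
theorem stmt14 [Nonempty V] (G : SimpleGraph V) [DecidableRel G.Adj]
    (r : ℕ) (hr : 1 ≤ r) (hreg : G.IsRegularOfDegree r) :
    letI n : ℕ := Fintype.card V
    letI lam2 : ℝ := secondLargest (G.adjMatrix ℝ) (adjHerm G)
    letI lamn : ℝ := smallestEig (G.adjMatrix ℝ) (adjHerm G)
    letI mu : ℝ := max (lam2 + 1) (-lamn - 1)
    (n : ℝ) / 4 * ((lam2 - lamn) / ((r : ℝ) - lamn)) ≤ (n : ℝ) / 2 * (mu / (mu + r + 1)) ∧
    ((n : ℝ) / 4 * ((lam2 - lamn) / ((r : ℝ) - lamn)) = (n : ℝ) / 2 * (mu / (mu + r + 1)) ↔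
      lam2 = (r : ℝ) ∨ lam2 + lamn + 2 = 0) := by
    classical
  have hA := adjHerm G
  obtain ⟨v⟩ := (inferInstance : Nonempty V)
  have hdeg : G.degree v = r := hreg v
  have hpos : 0 < (G.neighborFinset v).card := by
    rw [SimpleGraph.card_neighborFinset_eq_degree, hdeg]; omega
  obtain ⟨w, hw⟩ := Finset.card_pos.mp hpos
  have hvw : v ≠ w := G.ne_of_adj ((SimpleGraph.mem_neighborFinset G v w).mp hw)
  have hcard : 2 ≤ Fintype.card V := Fintype.one_lt_card_iff_nontrivial.mpr ⟨⟨v, w, hvw⟩⟩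
  have hbound : ∀ i, |(adjHerm G).eigenvalues i| ≤ (r : ℝ) := eig_abs_le G r hreg _
  have hsum : ∑ i, (adjHerm G).eigenvalues i = 0 := by
    rw [← trace_eq_sum_eigs _ (adjHerm G)]
    simp
  set l := eigList (G.adjMatrix ℝ) (adjHerm G) with hl
  have hlen : l.length = Fintype.card V := by
    rw [hl, eigList, Multiset.length_sort, Multiset.card_map]; rfl
  have hsort : l.Pairwise (· ≤ ·) := Multiset.pairwise_sort _ _
  have hmem : ∀ x ∈ l, ∃ i, (adjHerm G).eigenvalues i = x := by
    intro x hx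
    rw [hl, eigList, Multiset.mem_sort, Multiset.mem_map] at hx
    obtain ⟨i, _, h⟩ := hx
    exact ⟨i, h⟩
  have hlsum : l.sum = 0 := by
    calc l.sum = ((l : List ℝ) : Multiset ℝ).sum := by rw [Multiset.sum_coe]
      _ = (Finset.univ.val.map (adjHerm G).eigenvalues).sum := by
          rw [hl, eigList, Multiset.sort_eq]
      _ = ∑ i, (adjHerm G).eigenvalues i := rfl
      _ = 0 := hsum
  have h0 : 0 < l.length := by omega
  have h2 : Fintype.card V - 2 < l.length := by omega
  have hbg : smallestEig (G.adjMatrix ℝ) (adjHerm G) = l[0] := List.getD_eq_getElem l 0 h0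
  have hag : secondLargest (G.adjMatrix ℝ) (adjHerm G) = l[Fintype.card V - 2] :=
    List.getD_eq_getElem l 0 h2
  set a := secondLargest (G.adjMatrix ℝ) (adjHerm G) with haa
  set b := smallestEig (G.adjMatrix ℝ) (adjHerm G) with hbb
  have hba : b ≤ a := by
    rw [hbg, hag]
    exact hsort.rel_get_of_le (a := ⟨0, h0⟩) (b := ⟨Fintype.card V - 2, h2⟩) (by simp)
  have hmin : ∀ x ∈ l, b ≤ x := by
    intro x hx
    obtain ⟨j, hj, hjx⟩ := List.mem_iff_getElem.mp hx
    rw [hbg, ← hjx]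
    exact hsort.rel_get_of_le (a := ⟨0, h0⟩) (b := ⟨j, hj⟩) (by simp)
  have hb0 : b ≤ 0 := by
    have hns := List.card_nsmul_le_sum l b hmin
    rw [hlsum, nsmul_eq_mul, hlen] at hns
    have hn : (0:ℝ) < Fintype.card V := by exact_mod_cast Fintype.card_pos
    nlinarith
  have hamem : a ∈ l := hag ▸ List.getElem_mem h2
  have hbmem : b ∈ l := hbg ▸ List.getElem_mem h0
  obtain ⟨i, hi⟩ := hmem _ hamem
  obtain ⟨j, hj⟩ := hmem _ hbmem
  have har : a ≤ (r : ℝ) := hi ▸ (abs_le.mp (hbound i)).2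
  have hbr : -(r : ℝ) ≤ b := hj ▸ (abs_le.mp (hbound j)).1
  have hr' : (1:ℝ) ≤ (r : ℝ) := by exact_mod_cast hr
  have hcore := core_alg (r : ℝ) a b hr' hba har hbr hb0
  have hn4 : (0:ℝ) < (Fintype.card V : ℝ) / 4 := by
    have : (0:ℝ) < Fintype.card V := by exact_mod_cast Fintype.card_pos
    linarith
  set mu : ℝ := max (a + 1) (-b - 1) with hmu
  have hrw : (Fintype.card V : ℝ)/2 * (mu/(mu + r + 1)) =
      (Fintype.card V : ℝ)/4 * (2*(mu/(mu + r + 1))) := by ring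
  refine ⟨?_, ?_⟩
  · rw [hrw]
    exact mul_le_mul_of_nonneg_left hcore.1 hn4.le
  · rw [hrw]
    constructor
    · intro h
      exact hcore.2.mp (mul_left_cancel₀ hn4.ne' h)
    · intro h
      rw [hcore.2.mpr h]
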